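/- Fix real numbers q, ρ, y. Let a_{n,2i} (0 ≤ i ≤ ⌊n/2⌋) be the coefficients in the expansion x^n = Σ_{i=0}^{⌊n/2⌋} a_{n,2i}·H_{n−2i}(x|q) of the monomial x^n in q-Hermite polynomials, and define m_n(y) = Σ_{k=0}^{⌊n/2⌋} ρ^{n−2k}·a_{n,2k}·H_{n−2k}(y|q). Let S_n(y) = [ m_{i+j}(y) ]_{i,j=0,…,n−1} be the n×n Hankel matrix of these quantities. Then for every n ≥ 1, det S_{n+1}(y) = [n]_q! · ∏_{i=1}^{n}(1 − ρ²·q^{i−1}) · det S_n(y); in particular the ratio det S_{n+1}/det S_n does not depend on y. -/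

import Mathlib

open MeasureTheory Finset

noncomputable section

/-- The `q`-integer `[n]_q = 1 + q + ⋯ + q^{n-1}`. -/
def qInt (q : ℝ) (n : ℕ) : ℝ := ∑ i ∈ Finset.range n, q ^ i

/-- The (renormalized) continuous `q`-Hermite polynomials, as functions:
`H_{-1} = 0`, `H_0 = 1`, `H_{n+1}(x) = x H_n(x) - [n]_q H_{n-1}(x)`. -/
def qHermite (q : ℝ) : ℕ → ℝ → ℝ
  | 0 => fun _ => 1
  | 1 => fun x => x
  | n + 2 => fun x => x * qHermite q (n + 1) x - qInt q (n + 1) * qHermite q n x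


/-- The `q`-factorial `[n]_q! = [1]_q [2]_q ⋯ [n]_q`, with `[0]_q! = 1`. -/
def qFact (q : ℝ) (n : ℕ) : ℝ := ∏ i ∈ Finset.range n, qInt q (i + 1)

namespace HankelAux

open Polynomial

lemma qInt_zero (q : ℝ) : qInt q 0 = 0 := by simp [qInt]

lemma qInt_one (q : ℝ) : qInt q 1 = 1 := by simp [qInt]

lemma qInt_succ (q : ℝ) (n : ℕ) : qInt q (n + 1) = qInt q n + q ^ n :=
  Finset.sum_range_succ _ n

lemma qInt_add (q : ℝ) (s t : ℕ) : qInt q (s + t) = qInt q s + q ^ s * qInt q t := by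
  rw [qInt, Finset.sum_range_add, qInt, qInt, Finset.mul_sum]
  simp [pow_add]

/-- q-Hermite polynomials as `Polynomial ℝ`. -/
def Hp (q : ℝ) : ℕ → Polynomial ℝ
  | 0 => 1
  | 1 => X
  | n + 2 => X * Hp q (n + 1) - C (qInt q (n + 1)) * Hp q n

lemma Hp_eval (q : ℝ) (n : ℕ) (x : ℝ) : (Hp q n).eval x = qHermite q n x := by
  induction n using Nat.twoStepInduction with
  | zero => simp [Hp, qHermite]
  | one => simp [Hp, qHermite]
  | more n ih1 ih2 => simp only [Hp, qHermite, eval_sub, eval_mul, eval_X, eval_C, ih1, ih2]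

lemma Hp_monic_natDegree (q : ℝ) (n : ℕ) : (Hp q n).Monic ∧ (Hp q n).natDegree = n := by
  induction n using Nat.twoStepInduction with
  | zero => exact ⟨monic_one, natDegree_one⟩
  | one => exact ⟨monic_X, natDegree_X⟩
  | more n ih1 ih2 =>
    have hm : (X * Hp q (n + 1)).Monic := monic_X.mul ih2.1
    have hd : (X * Hp q (n + 1)).natDegree = n + 2 := by
      rw [monic_X.natDegree_mul ih2.1, natDegree_X, ih2.2]
      omega
    have hlt : (C (qInt q (n + 1)) * Hp q n).degree < (X * Hp q (n + 1)).degree := by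
      have h1 : (C (qInt q (n + 1)) * Hp q n).degree ≤ (Hp q n).degree := by
        refine le_trans (degree_mul_le _ _) ?_
        refine le_trans (add_le_add degree_C_le le_rfl) ?_
        rw [zero_add]
      refine lt_of_le_of_lt h1 ?_
      rw [degree_eq_natDegree ih1.1.ne_zero, ih1.2, degree_eq_natDegree hm.ne_zero, hd,
        Nat.cast_lt]
      omega
    constructor
    · exact hm.sub_of_left hlt
    · show (X * Hp q (n + 1) - C (qInt q (n + 1)) * Hp q n).natDegree = n + 2
      rw [← hd]
      apply natDegree_sub_eq_left_of_natDegree_lt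
      by_cases h0 : C (qInt q (n + 1)) * Hp q n = 0
      · rw [h0, natDegree_zero, hd]; omega
      · exact natDegree_lt_natDegree h0 hlt

lemma X_mul_Hp (q : ℝ) (k : ℕ) :
    X * Hp q k = Hp q (k + 1) + C (qInt q k) * Hp q (k - 1) := by
  cases k with
  | zero => simp [Hp, qInt_zero]
  | succ s => rw [show s + 1 + 1 = s + 2 from rfl, Hp]; ring_nf; simp [Nat.add_sub_cancel]

/-- Al-Salam–Chihara-type polynomials. -/
def Qp (q ρ y : ℝ) : ℕ → Polynomial ℝ
  | 0 => 1
  | 1 => X - C (ρ * y)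
  | n + 2 => (X - C (ρ * y * q ^ (n + 1))) * Qp q ρ y (n + 1)
      - C (qInt q (n + 1) * (1 - ρ ^ 2 * q ^ n)) * Qp q ρ y n

lemma Qp_monic_natDegree (q ρ y : ℝ) (n : ℕ) :
    (Qp q ρ y n).Monic ∧ (Qp q ρ y n).natDegree = n := by
  induction n using Nat.twoStepInduction with
  | zero => exact ⟨monic_one, natDegree_one⟩
  | one => exact ⟨monic_X_sub_C _, natDegree_X_sub_C _⟩
  | more n ih1 ih2 =>
    have hm : ((X - C (ρ * y * q ^ (n + 1))) * Qp q ρ y (n + 1)).Monic :=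
      (monic_X_sub_C _).mul ih2.1
    have hd : ((X - C (ρ * y * q ^ (n + 1))) * Qp q ρ y (n + 1)).natDegree = n + 2 := by
      rw [(monic_X_sub_C _).natDegree_mul ih2.1, natDegree_X_sub_C, ih2.2]
      omega
    have hlt : (C (qInt q (n + 1) * (1 - ρ ^ 2 * q ^ n)) * Qp q ρ y n).degree
        < ((X - C (ρ * y * q ^ (n + 1))) * Qp q ρ y (n + 1)).degree := by
      have h1 : (C (qInt q (n + 1) * (1 - ρ ^ 2 * q ^ n)) * Qp q ρ y n).degree
          ≤ (Qp q ρ y n).degree := by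
        refine le_trans (degree_mul_le _ _) ?_
        refine le_trans (add_le_add degree_C_le le_rfl) ?_
        rw [zero_add]
      refine lt_of_le_of_lt h1 ?_
      rw [degree_eq_natDegree ih1.1.ne_zero, ih1.2, degree_eq_natDegree hm.ne_zero, hd,
        Nat.cast_lt]
      omega
    constructor
    · exact hm.sub_of_left hlt
    · show ((X - C (ρ * y * q ^ (n + 1))) * Qp q ρ y (n + 1)
          - C (qInt q (n + 1) * (1 - ρ ^ 2 * q ^ n)) * Qp q ρ y n).natDegree = n + 2
      rw [← hd]
      apply natDegree_sub_eq_left_of_natDegree_lt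
      by_cases h0 : C (qInt q (n + 1) * (1 - ρ ^ 2 * q ^ n)) * Qp q ρ y n = 0
      · rw [h0, natDegree_zero, hd]; omega
      · exact natDegree_lt_natDegree h0 hlt

/-- The moment functional determined by the moment sequence `m`. -/
def Lf (m : ℕ → ℝ) : Polynomial ℝ →ₗ[ℝ] ℝ where
  toFun p := p.sum fun k c => c * m k
  map_add' p r := Polynomial.sum_add_index p r _ (fun i => zero_mul _)
    (fun i a b => add_mul a b _)
  map_smul' b p := by
    show (b • p).sum (fun k c => c * m k) = (RingHom.id ℝ) b • p.sum (fun k c => c * m k)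
    rw [Polynomial.sum_smul_index p b (fun k c => c * m k) (fun i => zero_mul (m i))]
    simp only [RingHom.id_apply, smul_eq_mul, Polynomial.sum_def, Finset.mul_sum]
    exact Finset.sum_congr rfl fun i _ => by ring

lemma Lf_Xpow (m : ℕ → ℝ) (n : ℕ) : Lf m (X ^ n) = m n := by
  show (X ^ n : Polynomial ℝ).sum (fun k c => c * m k) = m n
  rw [X_pow_eq_monomial, Polynomial.sum_monomial_index (n := n) 1 (fun k c => c * m k) (zero_mul (m n)), one_mul]

lemma Lf_C_mul (m : ℕ → ℝ) (c : ℝ) (p : Polynomial ℝ) :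
    Lf m (C c * p) = c * Lf m p := by
  rw [← Polynomial.smul_eq_C_mul, LinearMap.map_smul]; rfl

/-- Rising product of q-integers `[t+1][t+2]⋯[t+n]`. -/
def Rf (q : ℝ) (t n : ℕ) : ℝ := ∏ j ∈ Finset.range n, qInt q (t + 1 + j)

lemma Rf_succ (q : ℝ) (t n : ℕ) : Rf q t (n + 1) = Rf q t n * qInt q (t + 1 + n) :=
  Finset.prod_range_succ _ _

lemma Rf_succ' (q : ℝ) (t n : ℕ) : Rf q t (n + 1) = qInt q (t + 1) * Rf q (t + 1) n := by
  rw [Rf, Rf, Finset.prod_range_succ']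
  rw [show (∏ j ∈ Finset.range n, qInt q (t + 1 + (j + 1)))
      = ∏ j ∈ Finset.range n, qInt q (t + 1 + 1 + j) from
    Finset.prod_congr rfl fun j _ => by congr 1; omega]
  rw [show t + 1 + 0 = t + 1 from rfl]
  ring

/-- The mixed values `L(H_k Q_n)`. -/
def Wf (q ρ y : ℝ) (k n : ℕ) : ℝ :=
  (∏ j ∈ Finset.range n, qInt q (k - j)) * (∏ i ∈ Finset.range n, (1 - ρ ^ 2 * q ^ i))
    * ρ ^ (k - n) * qHermite q (k - n) y

lemma Wf_eq_zero (q ρ y : ℝ) {k n : ℕ} (h : k < n) : Wf q ρ y k n = 0 := by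
  have hz : ∏ j ∈ Finset.range n, qInt q (k - j) = 0 :=
    Finset.prod_eq_zero (Finset.mem_range.mpr h) (by rw [Nat.sub_self, qInt_zero])
  rw [Wf, hz, zero_mul, zero_mul, zero_mul]

lemma Wf_shift (q ρ y : ℝ) (t n : ℕ) :
    Wf q ρ y (n + t) n = Rf q t n * (∏ i ∈ Finset.range n, (1 - ρ ^ 2 * q ^ i))
      * ρ ^ t * qHermite q t y := by
  rw [Wf, Nat.add_sub_cancel_left]
  congr 3
  rw [Rf, ← Finset.prod_range_reflect (fun j => qInt q (t + 1 + j)) n]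
  apply Finset.prod_congr rfl
  intro j hj
  have := Finset.mem_range.mp hj
  congr 1
  omega

lemma Wf_rec (q ρ y : ℝ) (n k : ℕ) :
    Wf q ρ y k (n + 2) = Wf q ρ y (k + 1) (n + 1) + qInt q k * Wf q ρ y (k - 1) (n + 1)
      - ρ * y * q ^ (n + 1) * Wf q ρ y k (n + 1)
      - qInt q (n + 1) * (1 - ρ ^ 2 * q ^ n) * Wf q ρ y k n := by
  rcases Nat.lt_or_ge k n with h | h
  · rw [Wf_eq_zero q ρ y (show k < n + 2 by omega), Wf_eq_zero q ρ y (show k + 1 < n + 1 by omega),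
      Wf_eq_zero q ρ y (show k - 1 < n + 1 by omega), Wf_eq_zero q ρ y (show k < n + 1 by omega),
      Wf_eq_zero q ρ y h]
    ring
  obtain ⟨t, rfl⟩ : ∃ t, k = n + t := ⟨k - n, by omega⟩
  match t with
  | 0 =>
    simp only [Nat.add_zero]
    rw [Wf_eq_zero q ρ y (show n < n + 2 by omega),
      Wf_eq_zero q ρ y (show n - 1 < n + 1 by omega),
      Wf_eq_zero q ρ y (show n < n + 1 by omega)]
    have h1 := Wf_shift q ρ y 0 (n + 1)
    have h2 := Wf_shift q ρ y 0 n
    simp only [Nat.add_zero] at h1 h2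
    rw [h1, h2, Rf_succ q 0 (n)]
    rw [show 0 + 1 + n = n + 1 from by omega]
    rw [Finset.prod_range_succ fun i => (1 - ρ ^ 2 * q ^ i)]
    simp only [pow_zero, qHermite]
    ring
  | 1 =>
    rw [Wf_eq_zero q ρ y (show n + 1 < n + 2 by omega),
      show n + 1 - 1 = n from by omega,
      Wf_eq_zero q ρ y (show n < n + 1 by omega)]
    have h1 := Wf_shift q ρ y 1 (n + 1)
    have h3 := Wf_shift q ρ y 0 (n + 1)
    have h4 := Wf_shift q ρ y 1 n
    rw [show n + 1 + 1 = n + 1 + 1 from rfl] at h1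
    simp only [Nat.add_zero] at h3
    rw [show n + 1 + 1 = n + 2 from rfl] at h1 ⊢
    rw [h1, h3, h4, Rf_succ q 1 n, Rf_succ' q 0 n,
      show 1 + 1 + n = n + 2 from by omega, qInt_succ q (n + 1), qInt_one,
      Finset.prod_range_succ fun i => (1 - ρ ^ 2 * q ^ i)]
    simp only [pow_zero, pow_one, qHermite]
    ring
  | (t + 2) =>
    have H0 := Wf_shift q ρ y t (n + 2)
    rw [show n + 2 + t = n + (t + 2) from by omega] at H0
    have H1 := Wf_shift q ρ y (t + 2) (n + 1)
    rw [show n + 1 + (t + 2) = n + (t + 2) + 1 from by omega] at H1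
    have H2 := Wf_shift q ρ y t (n + 1)
    rw [show n + 1 + t = n + (t + 2) - 1 from by omega] at H2
    have H3 := Wf_shift q ρ y (t + 1) (n + 1)
    rw [show n + 1 + (t + 1) = n + (t + 2) from by omega] at H3
    have H4 := Wf_shift q ρ y (t + 2) n
    rw [show n + (t + 2) = n + (t + 2) from rfl] at H4
    rw [H0, H1, H2, H3, H4]
    have hC : Rf q (t + 1) n * qInt q (n + (t + 2)) = qInt q (t + 2) * Rf q (t + 2) n := by
      have e1 := Rf_succ q (t + 1) n
      have e2 := Rf_succ' q (t + 1) n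
      rw [show t + 1 + 1 + n = n + (t + 2) from by omega] at e1
      rw [show t + 1 + 1 = t + 2 from rfl] at e2
      rw [← e1, e2]
    have hq : qInt q (t + 2 + 1 + n) = qInt q (n + 1) + q ^ (n + 1) * qInt q (t + 2) := by
      have h5 := qInt_add q (n + 1) (t + 2)
      rw [show n + 1 + (t + 2) = t + 2 + 1 + n from by omega] at h5
      exact h5
    rw [Rf_succ' q t (n + 1), Rf_succ' q (t + 1) n, Rf_succ q (t + 2) n, Rf_succ' q t n,
      show t + 1 + 1 = t + 2 from rfl, hq,
      show qHermite q (t + 2) y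
          = y * qHermite q (t + 1) y - qInt q (t + 1) * qHermite q t y from rfl,
      Finset.prod_range_succ (fun i => (1 - ρ ^ 2 * q ^ i)) (n + 1),
      Finset.prod_range_succ (fun i => (1 - ρ ^ 2 * q ^ i)) n]
    linear_combination (-(qInt q (t + 1)) * (∏ i ∈ Finset.range n, (1 - ρ ^ 2 * q ^ i))
      * (1 - ρ ^ 2 * q ^ n) * ρ ^ t * qHermite q t y) * hC

section WithHyp

variable {q ρ y : ℝ} {a : ℕ → ℕ → ℝ} {m : ℕ → ℝ}

lemma Xpow_eq (ha : ∀ (n : ℕ) (x : ℝ),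
      x ^ n = ∑ i ∈ Finset.range (n / 2 + 1), a n (2 * i) * qHermite q (n - 2 * i) x)
    (n : ℕ) :
    (X : Polynomial ℝ) ^ n
      = ∑ i ∈ Finset.range (n / 2 + 1), C (a n (2 * i)) * Hp q (n - 2 * i) := by
  apply Polynomial.funext
  intro x
  rw [Polynomial.eval_finset_sum]
  simp only [eval_mul, eval_pow, eval_X, eval_C, Hp_eval]
  exact ha n x

lemma two_mul_le_of_mem {n i : ℕ} (hi : i ∈ Finset.range (n / 2 + 1)) : 2 * i ≤ n := by
  have := Finset.mem_range.mp hi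
  omega

lemma a_zero_one (ha : ∀ (n : ℕ) (x : ℝ),
      x ^ n = ∑ i ∈ Finset.range (n / 2 + 1), a n (2 * i) * qHermite q (n - 2 * i) x)
    (n : ℕ) : a n 0 = 1 := by
  have h := congrArg (fun p => Polynomial.coeff p n) (Xpow_eq ha n)
  simp only [Polynomial.coeff_X_pow_self, Polynomial.finset_sum_coeff,
    Polynomial.coeff_C_mul] at h
  have hsum : ∑ i ∈ Finset.range (n / 2 + 1), a n (2 * i) * (Hp q (n - 2 * i)).coeff n
      = a n 0 := by
    rw [Finset.sum_eq_single 0]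
    · have hmn := Hp_monic_natDegree q n
      have hc : (Hp q n).coeff n = 1 := by
        have h1 := hmn.1.coeff_natDegree
        rw [hmn.2] at h1
        exact h1
      simp only [Nat.mul_zero, Nat.sub_zero, hc, mul_one]
    · intro i hi hi0
      have h2i : 2 * i ≤ n := two_mul_le_of_mem hi
      have hz : (Hp q (n - 2 * i)).coeff n = 0 := by
        apply Polynomial.coeff_eq_zero_of_natDegree_lt
        rw [(Hp_monic_natDegree q (n - 2 * i)).2]
        omega
      rw [hz, mul_zero]
    · intro h0
      exact absurd (Finset.mem_range.mpr (by omega)) h0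
  rw [hsum] at h
  exact h.symm

lemma L_Hp (ha : ∀ (n : ℕ) (x : ℝ),
      x ^ n = ∑ i ∈ Finset.range (n / 2 + 1), a n (2 * i) * qHermite q (n - 2 * i) x)
    (hm : ∀ n : ℕ,
      m n = ∑ k ∈ Finset.range (n / 2 + 1), ρ ^ (n - 2 * k) * a n (2 * k) *
        qHermite q (n - 2 * k) y)
    (k : ℕ) : Lf m (Hp q k) = ρ ^ k * qHermite q k y := by
  induction k using Nat.strong_induction_on with
  | _ k ih =>
    have e1 : m k = ∑ i ∈ Finset.range (k / 2 + 1), a k (2 * i) * Lf m (Hp q (k - 2 * i)) := by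
      have := congrArg (Lf m) (Xpow_eq ha k)
      rw [Lf_Xpow, map_sum] at this
      simpa only [Lf_C_mul] using this
    have e2 := hm k
    rw [Finset.sum_range_succ'] at e1 e2
    have etail : (∑ i ∈ Finset.range (k / 2), a k (2 * (i + 1)) * Lf m (Hp q (k - 2 * (i + 1))))
        = ∑ i ∈ Finset.range (k / 2), ρ ^ (k - 2 * (i + 1)) * a k (2 * (i + 1)) *
            qHermite q (k - 2 * (i + 1)) y := by
      apply Finset.sum_congr rfl
      intro i hi
      have hi' : i + 1 ≤ k / 2 := by have := Finset.mem_range.mp hi; omega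
      have h2i : 2 * (i + 1) ≤ k := by omega
      have hlt : k - 2 * (i + 1) < k := by omega
      rw [ih _ hlt]
      ring
    rw [etail] at e1
    simp only [Nat.mul_zero, Nat.sub_zero, a_zero_one ha, one_mul, mul_one] at e1 e2
    linarith [e1, e2]

lemma L_HpQp (ha : ∀ (n : ℕ) (x : ℝ),
      x ^ n = ∑ i ∈ Finset.range (n / 2 + 1), a n (2 * i) * qHermite q (n - 2 * i) x)
    (hm : ∀ n : ℕ,
      m n = ∑ k ∈ Finset.range (n / 2 + 1), ρ ^ (n - 2 * k) * a n (2 * k) *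
        qHermite q (n - 2 * k) y)
    (n k : ℕ) : Lf m (Hp q k * Qp q ρ y n) = Wf q ρ y k n := by
  induction n using Nat.twoStepInduction generalizing k with
  | zero =>
    rw [show Qp q ρ y 0 = 1 from rfl, mul_one, L_Hp ha hm]
    simp [Wf]
  | one =>
    have hx : Hp q k * Qp q ρ y 1
        = Hp q (k + 1) + C (qInt q k) * Hp q (k - 1) - C (ρ * y) * Hp q k := by
      rw [show Qp q ρ y 1 = X - C (ρ * y) from rfl]
      linear_combination X_mul_Hp q k
    rw [hx, map_sub, map_add, Lf_C_mul, Lf_C_mul, L_Hp ha hm, L_Hp ha hm, L_Hp ha hm]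
    cases k with
    | zero =>
      rw [Wf_eq_zero q ρ y (by omega)]
      simp [qInt_zero, qHermite]
    | succ s =>
      have h1 := Wf_shift q ρ y s 1
      rw [show 1 + s = s + 1 from by omega] at h1
      rw [h1, Rf, Finset.prod_range_one, show s + 1 + 0 = s + 1 from rfl,
        Finset.prod_range_one]
      simp only [Nat.add_sub_cancel]
      rw [show qHermite q (s + 1 + 1) y
          = y * qHermite q (s + 1) y - qInt q (s + 1) * qHermite q s y from rfl]
      ring
  | more n ih1 ih2 =>
    have hpoly : Hp q k * Qp q ρ y (n + 2)
        = Hp q (k + 1) * Qp q ρ y (n + 1) + C (qInt q k) * (Hp q (k - 1) * Qp q ρ y (n + 1))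
          - C (ρ * y * q ^ (n + 1)) * (Hp q k * Qp q ρ y (n + 1))
          - C (qInt q (n + 1) * (1 - ρ ^ 2 * q ^ n)) * (Hp q k * Qp q ρ y n) := by
      rw [show Qp q ρ y (n + 2) = (X - C (ρ * y * q ^ (n + 1))) * Qp q ρ y (n + 1)
          - C (qInt q (n + 1) * (1 - ρ ^ 2 * q ^ n)) * Qp q ρ y n from rfl]
      have hCmul : (C (ρ * y * q ^ (n + 1)) : Polynomial ℝ) = C (ρ * y * q ^ (n + 1)) := rfl
      linear_combination Qp q ρ y (n + 1) * X_mul_Hp q k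
    rw [hpoly, map_sub, map_sub, map_add, Lf_C_mul, Lf_C_mul, Lf_C_mul,
      ih2 (k + 1), ih2 (k - 1), ih2 k, ih1 k, Wf_rec]

lemma L_XpowQp (ha : ∀ (n : ℕ) (x : ℝ),
      x ^ n = ∑ i ∈ Finset.range (n / 2 + 1), a n (2 * i) * qHermite q (n - 2 * i) x)
    (hm : ∀ n : ℕ,
      m n = ∑ k ∈ Finset.range (n / 2 + 1), ρ ^ (n - 2 * k) * a n (2 * k) *
        qHermite q (n - 2 * k) y)
    (j n : ℕ) : Lf m (X ^ j * Qp q ρ y n)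
      = ∑ i ∈ Finset.range (j / 2 + 1), a j (2 * i) * Wf q ρ y (j - 2 * i) n := by
  rw [Xpow_eq ha j, Finset.sum_mul, map_sum]
  apply Finset.sum_congr rfl
  intro i _
  rw [mul_assoc, Lf_C_mul, L_HpQp ha hm]

lemma L_XpowQp_lt (ha : ∀ (n : ℕ) (x : ℝ),
      x ^ n = ∑ i ∈ Finset.range (n / 2 + 1), a n (2 * i) * qHermite q (n - 2 * i) x)
    (hm : ∀ n : ℕ,
      m n = ∑ k ∈ Finset.range (n / 2 + 1), ρ ^ (n - 2 * k) * a n (2 * k) *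
        qHermite q (n - 2 * k) y)
    {j n : ℕ} (hj : j < n) : Lf m (X ^ j * Qp q ρ y n) = 0 := by
  rw [L_XpowQp ha hm]
  apply Finset.sum_eq_zero
  intro i _
  rw [Wf_eq_zero q ρ y (by omega : j - 2 * i < n), mul_zero]

lemma L_XpowQp_eq (ha : ∀ (n : ℕ) (x : ℝ),
      x ^ n = ∑ i ∈ Finset.range (n / 2 + 1), a n (2 * i) * qHermite q (n - 2 * i) x)
    (hm : ∀ n : ℕ,
      m n = ∑ k ∈ Finset.range (n / 2 + 1), ρ ^ (n - 2 * k) * a n (2 * k) *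
        qHermite q (n - 2 * k) y)
    (n : ℕ) : Lf m (X ^ n * Qp q ρ y n)
      = qFact q n * ∏ i ∈ Finset.range n, (1 - ρ ^ 2 * q ^ i) := by
  rw [L_XpowQp ha hm, Finset.sum_eq_single 0]
  · have hd := Wf_shift q ρ y 0 n
    simp only [Nat.add_zero] at hd
    simp only [Nat.mul_zero, Nat.sub_zero, a_zero_one ha, one_mul]
    rw [hd]
    rw [show Rf q 0 n = qFact q n from
      Finset.prod_congr rfl fun j _ => by rw [show 0 + 1 + j = j + 1 from by omega]]
    simp [qHermite]
  · intro i hi hi0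
    have h2i : 2 * i ≤ n := two_mul_le_of_mem hi
    rw [Wf_eq_zero q ρ y (by omega : n - 2 * i < n), mul_zero]
  · intro h0
    exact absurd (Finset.mem_range.mpr (by omega)) h0

end WithHyp

end HankelAux

open HankelAux Polynomial

/-- Corollary 5: let `a n (2i)` be the coefficients of the expansion
`x^n = Σ_{i=0}^{⌊n/2⌋} a_{n,2i} H_{n-2i}(x|q)` of monomials in `q`-Hermite polynomials,
and let `m n = Σ_{k=0}^{⌊n/2⌋} ρ^{n-2k} a_{n,2k} H_{n-2k}(y|q)`.  Then the Hankel
determinants `det S_n`, where `S_n = [m_{i+j}]_{i,j=0,…,n-1}`, satisfy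
`det S_{n+1} = [n]_q! ∏_{i=1}^n (1 - ρ² q^{i-1}) det S_n` for every `n ≥ 1`;
in particular the ratio does not depend on `y`. -/
theorem hankel_det_moments (q ρ y : ℝ) (a : ℕ → ℕ → ℝ)
    (ha : ∀ (n : ℕ) (x : ℝ),
      x ^ n = ∑ i ∈ Finset.range (n / 2 + 1), a n (2 * i) * qHermite q (n - 2 * i) x)
    (m : ℕ → ℝ)
    (hm : ∀ n : ℕ,
      m n = ∑ k ∈ Finset.range (n / 2 + 1), ρ ^ (n - 2 * k) * a n (2 * k) *
        qHermite q (n - 2 * k) y)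
    (n : ℕ) (hn : 1 ≤ n) :
    (Matrix.of fun i j : Fin (n + 1) => m ((i : ℕ) + (j : ℕ))).det =
      qFact q n * (∏ i ∈ Finset.range n, (1 - ρ ^ 2 * q ^ i)) *
        (Matrix.of fun i j : Fin n => m ((i : ℕ) + (j : ℕ))).det := by
  classical
  set M : Matrix (Fin (n + 1)) (Fin (n + 1)) ℝ :=
    Matrix.of fun i j : Fin (n + 1) => m ((i : ℕ) + (j : ℕ)) with hM
  set c : Fin (n + 1) → ℝ := fun l => (Qp q ρ y n).coeff l with hc
  have hclast : c (Fin.last n) = 1 := by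
    have h := Qp_monic_natDegree q ρ y n
    show (Qp q ρ y n).coeff ((Fin.last n) : ℕ) = 1
    rw [Fin.val_last]
    have h1 := h.1.coeff_natDegree
    rw [h.2] at h1
    exact h1
  have hrow : ∀ j : Fin (n + 1), (∑ l : Fin (n + 1), c l • M l) j
      = Lf m (X ^ (j : ℕ) * Qp q ρ y n) := by
    intro j
    have hQ : Qp q ρ y n = ∑ l ∈ Finset.range (n + 1),
        C ((Qp q ρ y n).coeff l) * X ^ l := by
      conv_lhs => rw [(Qp q ρ y n).as_sum_range_C_mul_X_pow]
      rw [(Qp_monic_natDegree q ρ y n).2]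
    have hprod : X ^ (j : ℕ) * Qp q ρ y n
        = ∑ l ∈ Finset.range (n + 1), C ((Qp q ρ y n).coeff l) * X ^ ((j : ℕ) + l) := by
      conv_lhs => rw [hQ]
      rw [Finset.mul_sum]
      apply Finset.sum_congr rfl
      intro l _
      rw [pow_add]
      ring
    rw [hprod, map_sum]
    simp only [Lf_C_mul, Lf_Xpow]
    rw [Finset.sum_apply]
    simp only [Pi.smul_apply, smul_eq_mul, hM, hc, Matrix.of_apply]
    rw [← Fin.sum_univ_eq_sum_range
      (fun l => (Qp q ρ y n).coeff l * m ((j : ℕ) + l)) (n + 1)]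
    apply Finset.sum_congr rfl
    intro l _
    rw [Nat.add_comm (l : ℕ) (j : ℕ)]
  have hdet1 : (M.updateRow (Fin.last n) (∑ l, c l • M l)).det = M.det := by
    rw [Matrix.det_updateRow_sum, hclast, one_smul]
  set N := M.updateRow (Fin.last n) (∑ l, c l • M l) with hN
  have hNlast : ∀ j : Fin (n + 1), N (Fin.last n) j
      = if j = Fin.last n then qFact q n * ∏ i ∈ Finset.range n, (1 - ρ ^ 2 * q ^ i)
        else 0 := by
    intro j
    rw [hN, Matrix.updateRow_self, hrow j]
    by_cases hj : j = Fin.last n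
    · rw [if_pos hj, hj, Fin.val_last, L_XpowQp_eq ha hm]
    · rw [if_neg hj]
      have hne : (j : ℕ) ≠ n := fun hh => hj (Fin.ext (by rw [hh, Fin.val_last]))
      have hlt : (j : ℕ) < n := by have := j.isLt; omega
      exact L_XpowQp_lt ha hm hlt
  rw [← hdet1, Matrix.det_succ_row N (Fin.last n)]
  rw [Finset.sum_eq_single (Fin.last n)]
  · rw [hNlast, if_pos rfl, Fin.val_last]
    rw [show ((-1 : ℝ) ^ (n + n) = 1) from Even.neg_one_pow ⟨n, rfl⟩, one_mul]
    have hsub : N.submatrix (Fin.last n).succAbove (Fin.last n).succAbove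
        = Matrix.of fun i j : Fin n => m ((i : ℕ) + (j : ℕ)) := by
      ext i j
      rw [Matrix.submatrix_apply, Fin.succAbove_last, hN,
        Matrix.updateRow_ne (Fin.castSucc_lt_last i).ne]
      simp [hM, Matrix.of_apply]
    rw [hsub]
  · intro j _ hj
    rw [hNlast j, if_neg hj, mul_zero, zero_mul]
  · intro h0
    exact absurd (Finset.mem_univ _) h0
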